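/- arXiv:1401.1480 — 2 statements merged into one kernel-verified Lean document; each statement's English description precedes it below -/
import Mathlib

section
/- For all real s, ∫_s^∞ Q(√γ) dγ = (√s · e^{-s/2})/√(2π) + (1-s)·Q(√s), where Q is the standard Gaussian tail function. -/
open MeasureTheory Real

/-- The standard Gaussian tail function `Q(t) = ∫_t^∞ (1/√(2π)) e^{-u²/2} du`. -/
noncomputable def gaussQ (t : ℝ) : ℝ :=
  ∫ u in Set.Ioi t, (1 / Real.sqrt (2 * π)) * Real.exp (-u ^ 2 / 2)

section Aux

open Filter Set

/-- The standard Gaussian density. -/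
noncomputable def gphi (u : ℝ) : ℝ := (1 / Real.sqrt (2 * π)) * Real.exp (-u ^ 2 / 2)

lemma gphi_def (u : ℝ) : gphi u = (1 / Real.sqrt (2 * π)) * Real.exp (-u ^ 2 / 2) := rfl

lemma gphi_nonneg (u : ℝ) : 0 ≤ gphi u := by
  unfold gphi; positivity

lemma gphi_continuous : Continuous gphi := by
  unfold gphi; continuity

lemma gphi_integrable : Integrable gphi := by
  have h : Integrable fun x : ℝ => Real.exp (-(1/2 : ℝ) * x ^ 2) :=
    integrable_exp_neg_mul_sq (by norm_num)
  have h2 := h.const_mul (1 / Real.sqrt (2 * π))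
  have : gphi = fun u : ℝ => 1 / Real.sqrt (2 * π) * Real.exp (-(1/2 : ℝ) * u ^ 2) := by
    funext u; unfold gphi
    congr 1
    ring_nf
  rw [this]; exact h2

lemma gaussQ_eq (t : ℝ) : gaussQ t = ∫ u in Set.Ioi t, gphi u := rfl

lemma gaussQ_nonneg (t : ℝ) : 0 ≤ gaussQ t :=
  setIntegral_nonneg measurableSet_Ioi fun u _ => gphi_nonneg u

lemma gaussQ_split {a b : ℝ} (h : a ≤ b) :
    gaussQ a = (∫ u in Set.Ioc a b, gphi u) + gaussQ b := by
  rw [gaussQ_eq, gaussQ_eq, ← Set.Ioc_union_Ioi_eq_Ioi h,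
    setIntegral_union (Set.Ioc_disjoint_Ioi le_rfl) measurableSet_Ioi
      gphi_integrable.integrableOn gphi_integrable.integrableOn]

lemma gaussQ_eq_sub (t : ℝ) : gaussQ t = gaussQ 0 - ∫ u in (0:ℝ)..t, gphi u := by
  rcases le_or_gt 0 t with h | h
  · rw [intervalIntegral.integral_of_le h, gaussQ_split h]; ring
  · rw [intervalIntegral.integral_of_ge h.le, gaussQ_split h.le]; ring

lemma gaussQ_hasDerivAt (t : ℝ) : HasDerivAt gaussQ (-gphi t) t := by
  have hd : HasDerivAt (fun x => ∫ u in (0:ℝ)..x, gphi u) (gphi t) t :=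
    intervalIntegral.integral_hasDerivAt_right gphi_integrable.intervalIntegrable
      (gphi_continuous.stronglyMeasurableAtFilter _ _) gphi_continuous.continuousAt
  have h2 := (hd.const_sub (gaussQ 0))
  have he : (fun x => gaussQ 0 - ∫ u in (0:ℝ)..x, gphi u) = gaussQ := by
    funext x; exact (gaussQ_eq_sub x).symm
  rw [he] at h2
  exact h2

lemma gaussQ_continuous : Continuous gaussQ :=
  continuous_iff_continuousAt.2 fun t => (gaussQ_hasDerivAt t).continuousAt

lemma integrable_id_mul_exp : Integrable (fun u : ℝ => u * Real.exp (-u ^ 2 / 2)) := by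
  have h := integrable_mul_exp_neg_mul_sq (b := 1/2) (by norm_num)
  have e : (fun u : ℝ => u * Real.exp (-u ^ 2 / 2)) =
      fun x : ℝ => x * Real.exp (-(1/2 : ℝ) * x ^ 2) := by
    funext u; congr 1; ring_nf
  rw [e]; exact h

lemma neg_sq_div_two_tendsto : Tendsto (fun u : ℝ => -u ^ 2 / 2) atTop atBot := by
  have h1 : Tendsto (fun u : ℝ => u ^ 2) atTop atTop := tendsto_pow_atTop two_ne_zero
  have h2 : Tendsto (fun u : ℝ => -u ^ 2) atTop atBot := tendsto_neg_atTop_atBot.comp h1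
  exact h2.atBot_div_const two_pos

lemma int_exp_tail (t : ℝ) :
    ∫ u in Set.Ioi t, u * Real.exp (-u ^ 2 / 2) = Real.exp (-t ^ 2 / 2) := by
  have hderiv : ∀ x ∈ Set.Ici t, HasDerivAt (fun u : ℝ => -Real.exp (-u ^ 2 / 2))
      (x * Real.exp (-x ^ 2 / 2)) x := by
    intro x _
    have h1 : HasDerivAt (fun u : ℝ => -u ^ 2 / 2) (-x) x := by
      have := ((hasDerivAt_pow 2 x).neg.div_const 2)
      exact this.congr_deriv (by norm_num; ring)
    have h2 := h1.exp
    have h3 := h2.neg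
    exact h3.congr_deriv (by ring)
  have htend : Tendsto (fun u : ℝ => -Real.exp (-u ^ 2 / 2)) atTop (nhds 0) := by
    have := (tendsto_exp_atBot.comp neg_sq_div_two_tendsto).neg
    simpa using this
  have := integral_Ioi_of_hasDerivAt_of_tendsto' hderiv
    integrable_id_mul_exp.integrableOn htend
  rw [this]; ring

lemma gaussQ_le {t : ℝ} (ht : 0 < t) :
    gaussQ t ≤ 1 / Real.sqrt (2 * π) * (Real.exp (-t ^ 2 / 2) / t) := by
  have hC : (0:ℝ) < 1 / Real.sqrt (2 * π) := by positivity
  have key : ∫ u in Set.Ioi t, (1 / Real.sqrt (2 * π) / t) * (u * Real.exp (-u ^ 2 / 2))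
      = 1 / Real.sqrt (2 * π) * (Real.exp (-t ^ 2 / 2) / t) := by
    rw [integral_const_mul, int_exp_tail]; ring
  rw [gaussQ_eq, ← key]
  apply setIntegral_mono_on gphi_integrable.integrableOn
    ((integrable_id_mul_exp.const_mul _).integrableOn) measurableSet_Ioi
  intro u hu
  have hu' : t < u := hu
  rw [gphi_def]
  have h1 : (1:ℝ) ≤ u / t := (one_le_div ht).2 hu'.le
  have h2 : (0:ℝ) ≤ 1 / Real.sqrt (2 * π) * Real.exp (-u ^ 2 / 2) := by positivity
  calc 1 / Real.sqrt (2 * π) * Real.exp (-u ^ 2 / 2)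
      ≤ 1 / Real.sqrt (2 * π) * Real.exp (-u ^ 2 / 2) * (u / t) :=
        le_mul_of_one_le_right h2 h1
    _ = 1 / Real.sqrt (2 * π) / t * (u * Real.exp (-u ^ 2 / 2)) := by ring

lemma tendsto_mul_exp_neg_half : Tendsto (fun s : ℝ => s * Real.exp (-s / 2)) atTop (nhds 0) := by
  have h1 : Tendsto (fun x : ℝ => 2 * (x ^ 1 * Real.exp (-x))) atTop (nhds 0) := by
    simpa using (tendsto_pow_mul_exp_neg_atTop_nhds_zero 1).const_mul 2
  have h2 : Tendsto (fun s : ℝ => s / 2) atTop atTop := tendsto_id.atTop_div_const two_pos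
  have h3 := h1.comp h2
  convert h3 using 2 with s
  simp [Function.comp]
  ring_nf

lemma F_tendsto : Tendsto (fun s : ℝ => Real.sqrt s * Real.exp (-s / 2) / Real.sqrt (2 * π)
    + (1 - s) * gaussQ (Real.sqrt s)) atTop (nhds 0) := by
  set c : ℝ := 1 / Real.sqrt (2 * π) with hc
  have hcpos : 0 < c := by rw [hc]; positivity
  have hg : Tendsto (fun s : ℝ => 2 * c * (s * Real.exp (-s / 2))) atTop (nhds 0) := by
    simpa using tendsto_mul_exp_neg_half.const_mul (2 * c)
  have hgneg : Tendsto (fun s : ℝ => -(2 * c * (s * Real.exp (-s / 2)))) atTop (nhds 0) := by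
    simpa using hg.neg
  apply tendsto_of_tendsto_of_tendsto_of_le_of_le' hgneg hg
  · filter_upwards [eventually_ge_atTop (1:ℝ)] with s hs
    have hspos : (0:ℝ) < s := lt_of_lt_of_le one_pos hs
    have hsqpos : 0 < Real.sqrt s := Real.sqrt_pos.2 hspos
    have hsq_le : Real.sqrt s ≤ s := (Real.sqrt_le_left hspos.le).2 (by nlinarith)
    have he : 0 < Real.exp (-s / 2) := Real.exp_pos _
    have hQle : gaussQ (Real.sqrt s) ≤ c * (Real.exp (-s / 2) / Real.sqrt s) := by
      have := gaussQ_le hsqpos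
      rwa [Real.sq_sqrt hspos.le] at this
    have hterm1 : 0 ≤ Real.sqrt s * Real.exp (-s / 2) / Real.sqrt (2 * π) := by positivity
    have hQnn := gaussQ_nonneg (Real.sqrt s)
    have h2 : (1 - s) * gaussQ (Real.sqrt s) ≥ (1 - s) * (c * (Real.exp (-s / 2) / Real.sqrt s)) :=
      mul_le_mul_of_nonpos_left hQle (by linarith)
    have h3 : (1 - s) * (c * (Real.exp (-s / 2) / Real.sqrt s))
        ≥ (-s) * (c * (Real.exp (-s / 2) / Real.sqrt s)) := by
      apply mul_le_mul_of_nonneg_right (by linarith) (by positivity)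
    have h4 : (-s) * (c * (Real.exp (-s / 2) / Real.sqrt s))
        = -(c * (Real.sqrt s * Real.exp (-s/2))) := by
      rw [hc]; field_simp
      linear_combination (Real.sq_sqrt hspos.le)
    have h5 : c * (Real.sqrt s * Real.exp (-s/2)) ≤ c * (s * Real.exp (-s/2)) := by
      apply mul_le_mul_of_nonneg_left _ hcpos.le
      apply mul_le_mul_of_nonneg_right hsq_le he.le
    nlinarith [mul_pos hcpos (mul_pos hspos he)]
  · filter_upwards [eventually_ge_atTop (1:ℝ)] with s hs
    have hspos : (0:ℝ) < s := lt_of_lt_of_le one_pos hs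
    have hsq_le : Real.sqrt s ≤ s := (Real.sqrt_le_left hspos.le).2 (by nlinarith)
    have he : 0 < Real.exp (-s / 2) := Real.exp_pos _
    have hQnn := gaussQ_nonneg (Real.sqrt s)
    have hterm2 : (1 - s) * gaussQ (Real.sqrt s) ≤ 0 :=
      mul_nonpos_of_nonpos_of_nonneg (by linarith) hQnn
    have hterm1 : Real.sqrt s * Real.exp (-s / 2) / Real.sqrt (2 * π)
        ≤ c * (s * Real.exp (-s/2)) := by
      rw [hc, div_eq_mul_inv, mul_comm (1 / Real.sqrt (2*π))]
      have h6 : Real.sqrt s * Real.exp (-s/2) ≤ s * Real.exp (-s/2) :=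
        mul_le_mul_of_nonneg_right hsq_le he.le
      calc Real.sqrt s * Real.exp (-s / 2) * (Real.sqrt (2*π))⁻¹
          ≤ s * Real.exp (-s/2) * (Real.sqrt (2*π))⁻¹ :=
            mul_le_mul_of_nonneg_right h6 (by positivity)
        _ = s * Real.exp (-s/2) * (1 / Real.sqrt (2*π)) := by rw [one_div]
    nlinarith [mul_pos hcpos (mul_pos hspos he)]

lemma F_hasDerivAt {s : ℝ} (hs : 0 < s) :
    HasDerivAt (fun x => Real.sqrt x * Real.exp (-x / 2) / Real.sqrt (2 * π)
      + (1 - x) * gaussQ (Real.sqrt x)) (-gaussQ (Real.sqrt s)) s := by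
  have hsq : Real.sqrt s ≠ 0 := (Real.sqrt_pos.2 hs).ne'
  have h₁ : HasDerivAt Real.sqrt (1 / (2 * Real.sqrt s)) s := Real.hasDerivAt_sqrt hs.ne'
  have hlin : HasDerivAt (fun x : ℝ => -x / 2) (-1 / 2 : ℝ) s := by
    simpa using ((hasDerivAt_id s).neg.div_const 2)
  have hexp : HasDerivAt (fun x : ℝ => Real.exp (-x / 2)) (Real.exp (-s / 2) * (-1 / 2)) s :=
    hlin.exp
  have hQ : HasDerivAt (fun x => gaussQ (Real.sqrt x))
      (-gphi (Real.sqrt s) * (1 / (2 * Real.sqrt s))) s :=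
    (gaussQ_hasDerivAt (Real.sqrt s)).comp s h₁
  have h1 : HasDerivAt (fun x => Real.sqrt x * Real.exp (-x / 2) / Real.sqrt (2 * π))
      ((1 / (2 * Real.sqrt s) * Real.exp (-s / 2)
        + Real.sqrt s * (Real.exp (-s / 2) * (-1 / 2))) / Real.sqrt (2 * π)) s :=
    (h₁.mul hexp).div_const _
  have hl : HasDerivAt (fun x : ℝ => 1 - x) (-1 : ℝ) s := by
    simpa using (hasDerivAt_id s).const_sub 1
  have h2 : HasDerivAt (fun x => (1 - x) * gaussQ (Real.sqrt x))
      ((-1) * gaussQ (Real.sqrt s)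
        + (1 - s) * (-gphi (Real.sqrt s) * (1 / (2 * Real.sqrt s)))) s := hl.mul hQ
  have h3 := h1.add h2
  refine h3.congr_deriv ?_
  symm
  rw [gphi_def, Real.sq_sqrt hs.le]
  have hpi : Real.sqrt (2 * π) ≠ 0 := by positivity
  field_simp
  linear_combination (Real.exp (-(s/2))) *
    (Real.sq_sqrt hs.le)

lemma g_integrableOn (s : ℝ) : IntegrableOn (fun γ => gaussQ (Real.sqrt γ)) (Set.Ioi s) := by
  have hcont : Continuous fun γ : ℝ => gaussQ (Real.sqrt γ) :=
    gaussQ_continuous.comp Real.continuous_sqrt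
  have h1 : IntegrableOn (fun γ => gaussQ (Real.sqrt γ)) (Set.Ioc s (max s 1)) :=
    hcont.integrableOn_Ioc
  have hexp : IntegrableOn (fun γ : ℝ => 1 / Real.sqrt (2 * π) * Real.exp (-(1/2 : ℝ) * γ))
      (Set.Ioi (max s 1)) :=
    (exp_neg_integrableOn_Ioi _ (by norm_num : (0:ℝ) < 1/2)).const_mul _
  have h2 : IntegrableOn (fun γ => gaussQ (Real.sqrt γ)) (Set.Ioi (max s 1)) := by
    apply Integrable.mono' hexp (hcont.aestronglyMeasurable.restrict)
    filter_upwards [ae_restrict_mem measurableSet_Ioi] with γ hγ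
    have hγ1 : 1 ≤ γ := le_trans (le_max_right s 1) (le_of_lt hγ)
    have hγpos : (0:ℝ) < γ := lt_of_lt_of_le one_pos hγ1
    rw [Real.norm_eq_abs, abs_of_nonneg (gaussQ_nonneg _)]
    have hb := gaussQ_le (Real.sqrt_pos.2 hγpos)
    rw [Real.sq_sqrt hγpos.le] at hb
    have h1le : (1:ℝ) ≤ Real.sqrt γ := Real.one_le_sqrt.2 hγ1
    have hd : Real.exp (-γ / 2) / Real.sqrt γ ≤ Real.exp (-γ / 2) :=
      div_le_self (Real.exp_pos _).le h1le
    have he : -γ / 2 = -(1/2 : ℝ) * γ := by ring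
    calc gaussQ (Real.sqrt γ) ≤ 1 / Real.sqrt (2 * π) * (Real.exp (-γ / 2) / Real.sqrt γ) := hb
      _ ≤ 1 / Real.sqrt (2 * π) * Real.exp (-γ / 2) :=
          mul_le_mul_of_nonneg_left hd (by positivity)
      _ = 1 / Real.sqrt (2 * π) * Real.exp (-(1/2 : ℝ) * γ) := by rw [he]
  rw [← Set.Ioc_union_Ioi_eq_Ioi (le_max_left s 1)]
  exact h1.union h2

lemma F_continuous : Continuous (fun x : ℝ => Real.sqrt x * Real.exp (-x / 2) / Real.sqrt (2 * π)
    + (1 - x) * gaussQ (Real.sqrt x)) := by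
  apply Continuous.add
  · exact (Real.continuous_sqrt.mul (Real.continuous_exp.comp (by continuity))).div_const _
  · exact (continuous_const.sub continuous_id).mul (gaussQ_continuous.comp Real.continuous_sqrt)

lemma main_nonneg {s : ℝ} (hs : 0 ≤ s) :
    ∫ γ in Set.Ioi s, gaussQ (Real.sqrt γ) =
      Real.sqrt s * Real.exp (-s / 2) / Real.sqrt (2 * π) + (1 - s) * gaussQ (Real.sqrt s) := by
  have hres := integral_Ioi_of_hasDerivAt_of_tendsto
    (f := fun x => -(Real.sqrt x * Real.exp (-x / 2) / Real.sqrt (2 * π)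
      + (1 - x) * gaussQ (Real.sqrt x)))
    (f' := fun γ => gaussQ (Real.sqrt γ)) (a := s) (m := 0)
    (F_continuous.neg.continuousWithinAt)
    (fun x hx => by exact (F_hasDerivAt (lt_of_le_of_lt hs hx)).neg.congr_deriv (neg_neg _))
    (g_integrableOn s) (by simpa using F_tendsto.neg)
  rw [hres]; ring

end Aux

theorem integral_gaussQ_sqrt (s : ℝ) :
    ∫ γ in Set.Ioi s, gaussQ (Real.sqrt γ) =
      Real.sqrt s * Real.exp (-s / 2) / Real.sqrt (2 * π) + (1 - s) * gaussQ (Real.sqrt s) := by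
  rcases le_or_gt 0 s with hs | hs
  · exact main_nonneg hs
  · have h0 := main_nonneg (le_refl (0:ℝ))
    have hsplit : Set.Ioi s = Set.Ioc s 0 ∪ Set.Ioi 0 :=
      (Set.Ioc_union_Ioi_eq_Ioi hs.le).symm
    have hIoc : IntegrableOn (fun γ => gaussQ (Real.sqrt γ)) (Set.Ioc s 0) :=
      (gaussQ_continuous.comp Real.continuous_sqrt).integrableOn_Ioc
    rw [hsplit, setIntegral_union (Set.Ioc_disjoint_Ioi le_rfl) measurableSet_Ioi
      hIoc (g_integrableOn 0)]
    have hconst : ∫ γ in Set.Ioc s 0, gaussQ (Real.sqrt γ) = (0 - s) * gaussQ 0 := by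
      have heq : Set.EqOn (fun γ => gaussQ (Real.sqrt γ)) (fun _ => gaussQ 0) (Set.Ioc s 0) := by
        intro γ hγ
        simp only
        rw [Real.sqrt_eq_zero'.2 hγ.2]
      rw [setIntegral_congr_fun measurableSet_Ioc heq, setIntegral_const, Real.volume_real_Ioc_of_le hs.le]
      simp [smul_eq_mul]
    rw [hconst, h0, Real.sqrt_eq_zero'.2 hs.le]
    simp [Real.sqrt_zero]
    ring
end

section
/- Suppose H(θ) is such that |H(θ)|² > 0 for all θ, and define g_ZF-DFE = exp{(1/2π)∫ log|H(θ)|² dθ}, g_ZF-LE = [(1/2π)∫ dθ/|H(θ)|²]^{−1}, and SNR_DFE(ρ) = exp{(1/2π)∫ log(1 + ρ|H(θ)|²) dθ}. Then SNR_DFE(ρ) ≤ ρ·g_ZF-DFE + g_ZF-DFE/g_ZF-LE for every ρ > 0. -/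
open MeasureTheory Real

theorem snrDFE_upper_bound (H : ℝ → ℂ)
    (hH : Measurable H)
    (hpos : ∀ θ, 0 < ‖H θ‖ ^ 2)
    (hlogint : IntegrableOn (fun θ => Real.log (‖H θ‖ ^ 2)) (Set.Icc (-π) π))
    (hinvint : IntegrableOn (fun θ => 1 / ‖H θ‖ ^ 2) (Set.Icc (-π) π))
    (hint : ∀ ρ > (0 : ℝ), IntegrableOn
      (fun θ => Real.log (1 + ρ * ‖H θ‖ ^ 2)) (Set.Icc (-π) π)) :
    ∀ ρ > (0 : ℝ),
      Real.exp ((1 / (2 * π)) * ∫ θ in Set.Icc (-π) π,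
          Real.log (1 + ρ * ‖H θ‖ ^ 2)) ≤
        ρ * Real.exp ((1 / (2 * π)) * ∫ θ in Set.Icc (-π) π,
            Real.log (‖H θ‖ ^ 2)) +
          Real.exp ((1 / (2 * π)) * ∫ θ in Set.Icc (-π) π,
              Real.log (‖H θ‖ ^ 2)) /
            ((1 / (2 * π)) * ∫ θ in Set.Icc (-π) π, 1 / ‖H θ‖ ^ 2)⁻¹ := by
  intro ρ hρ
  have hπ : (0:ℝ) < π := Real.pi_pos
  have h2π : (0:ℝ) < 2*π := by positivity
  set s : Set ℝ := Set.Icc (-π) π with hs_def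
  set F : ℝ → ℝ := fun θ => ‖H θ‖ ^ 2 with hF_def
  have hvol : volume s = ENNReal.ofReal (2*π) := by
    rw [hs_def, Real.volume_Icc]; ring_nf
  set μ : Measure ℝ := volume.restrict s with hμ_def
  haveI : IsFiniteMeasure μ := by
    constructor
    rw [hμ_def, Measure.restrict_apply_univ, hvol]
    exact ENNReal.ofReal_lt_top
  haveI : NeZero μ := by
    constructor
    intro h
    have : μ Set.univ = 0 := by rw [h]; rfl
    rw [hμ_def, Measure.restrict_apply_univ, hvol] at this
    simp [ENNReal.ofReal_eq_zero] at this
    linarith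
  have hμu : (μ Set.univ).toReal = 2*π := by
    rw [hμ_def, Measure.restrict_apply_univ, hvol, ENNReal.toReal_ofReal h2π.le]
  -- key pointwise facts
  have hFpos : ∀ θ, 0 < F θ := hpos
  have hρF : ∀ θ, 0 < ρ * F θ := fun θ => mul_pos hρ (hFpos θ)
  have h1ρF : ∀ θ, 0 < 1 + ρ * F θ := fun θ => by have := hρF θ; linarith
  -- integrability
  have hlog_ρF : Integrable (fun θ => Real.log (ρ * F θ)) μ := by
    have : (fun θ => Real.log (ρ * F θ)) = fun θ => Real.log ρ + Real.log (F θ) := by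
      funext θ
      rw [Real.log_mul hρ.ne' (hFpos θ).ne']
    rw [this]
    exact (integrable_const _).add hlogint
  have hf2 : Integrable (fun θ => Real.log (1 + ρ * F θ) - Real.log (ρ * F θ)) μ :=
    (hint ρ hρ).sub hlog_ρF
  have hexp_f2 : ∀ θ, Real.exp (Real.log (1 + ρ * F θ) - Real.log (ρ * F θ))
      = 1 + ρ⁻¹ * (1 / F θ) := by
    intro θ
    rw [Real.exp_sub, Real.exp_log (h1ρF θ), Real.exp_log (hρF θ), add_div,
      div_self (hρF θ).ne', one_div, mul_inv, add_comm]
    rw [mul_comm ρ⁻¹, one_div]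
    ring
  have hexp_f2_int : Integrable (fun θ =>
      Real.exp (Real.log (1 + ρ * F θ) - Real.log (ρ * F θ))) μ := by
    simp only [hexp_f2]
    exact (integrable_const _).add (hinvint.const_mul ρ⁻¹)
  -- Jensen
  have jensen := convexOn_exp.map_average_le (μ := μ)
    (f := fun θ => Real.log (1 + ρ * F θ) - Real.log (ρ * F θ))
    Real.continuous_exp.continuousOn isClosed_univ
    (Filter.Eventually.of_forall fun _ => trivial) hf2 hexp_f2_int
  rw [average_eq, average_eq, measureReal_def, hμu, smul_eq_mul, smul_eq_mul] at jensen
  -- compute integrals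
  have habs : ∀ θ, ρ⁻¹ * (1 / F θ) = ρ⁻¹ • (1 / F θ) := fun θ => rfl
  have hI2 : ∫ θ, Real.exp (Real.log (1 + ρ * F θ) - Real.log (ρ * F θ)) ∂μ
      = 2*π + ρ⁻¹ * ∫ θ, 1 / F θ ∂μ := by
    simp only [hexp_f2]
    rw [integral_add (integrable_const _) (hinvint.const_mul ρ⁻¹),
      integral_const, integral_const_mul, hμ_def, measureReal_def, Measure.restrict_apply_univ, hvol,
      ENNReal.toReal_ofReal h2π.le]
    simp [hF_def]
  have hI1 : ∫ θ, Real.log (ρ * F θ) ∂μ = 2*π * Real.log ρ + ∫ θ, Real.log (F θ) ∂μ := by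
    have : (fun θ => Real.log (ρ * F θ)) = fun θ => Real.log ρ + Real.log (F θ) := by
      funext θ; rw [Real.log_mul hρ.ne' (hFpos θ).ne']
    rw [this, integral_add (integrable_const _) hlogint, integral_const,
      hμ_def, measureReal_def, Measure.restrict_apply_univ, hvol, ENNReal.toReal_ofReal h2π.le]
    rw [smul_eq_mul]
  have hsplit : ∫ θ, Real.log (1 + ρ * F θ) ∂μ
      = (∫ θ, Real.log (ρ * F θ) ∂μ)
        + ∫ θ, (Real.log (1 + ρ * F θ) - Real.log (ρ * F θ)) ∂μ := by
    rw [integral_sub (hint ρ hρ) hlog_ρF]; ring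
  -- positivity of K
  set K : ℝ := (1 / (2*π)) * ∫ θ, 1 / F θ ∂μ with hK_def
  have hKint_pos : 0 < ∫ θ, 1 / F θ ∂μ := by
    rw [integral_pos_iff_support_of_nonneg_ae
      (Filter.Eventually.of_forall fun θ => by positivity) hinvint]
    have : Function.support (fun θ => 1 / F θ) = Set.univ := by
      ext θ
      simp only [Function.mem_support, Set.mem_univ, iff_true]
      exact one_div_ne_zero (hFpos θ).ne'
    rw [this, Measure.restrict_apply_univ, hvol]
    simp [h2π, hπ]
  have hKpos : 0 < K := mul_pos (by positivity) hKint_pos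
  set J : ℝ := ∫ θ, Real.log (F θ) ∂μ with hJ_def
  -- LHS computation
  have hLHS : Real.exp ((1 / (2*π)) * ∫ θ, Real.log (1 + ρ * F θ) ∂μ)
      = ρ * Real.exp ((1 / (2*π)) * J)
        * Real.exp ((1 / (2*π)) * ∫ θ, (Real.log (1 + ρ * F θ) - Real.log (ρ * F θ)) ∂μ) := by
    rw [hsplit, mul_add, Real.exp_add, hI1, mul_add]
    rw [show (1 / (2*π)) * (2*π * Real.log ρ) = Real.log ρ by field_simp]
    rw [Real.exp_add, Real.exp_log hρ]
  -- bound the Jensen factor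
  have hbound : Real.exp ((1 / (2*π)) * ∫ θ, (Real.log (1 + ρ * F θ) - Real.log (ρ * F θ)) ∂μ)
      ≤ 1 + ρ⁻¹ * K := by
    have h1 : (1 / (2*π)) * ∫ θ, (Real.log (1 + ρ * F θ) - Real.log (ρ * F θ)) ∂μ
        = (2*π)⁻¹ * ∫ θ, (Real.log (1 + ρ * F θ) - Real.log (ρ * F θ)) ∂μ := by
      rw [one_div]
    rw [h1]
    refine jensen.trans_eq ?_
    rw [hI2, mul_add, hK_def, inv_mul_cancel₀ h2π.ne']
    ring
  calc Real.exp ((1 / (2*π)) * ∫ θ, Real.log (1 + ρ * F θ) ∂μ)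
      = ρ * Real.exp ((1 / (2*π)) * J)
        * Real.exp ((1 / (2*π)) * ∫ θ, (Real.log (1 + ρ * F θ) - Real.log (ρ * F θ)) ∂μ) := hLHS
    _ ≤ ρ * Real.exp ((1 / (2*π)) * J) * (1 + ρ⁻¹ * K) := by
        apply mul_le_mul_of_nonneg_left hbound; positivity
    _ = ρ * Real.exp ((1 / (2*π)) * J) + Real.exp ((1 / (2*π)) * J) / K⁻¹ := by
        rw [div_inv_eq_mul]; field_simp
end
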